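/- The coefficient pairs arising from node binomials along a fixed chain of regular/critical choices generate exactly the pairs of adjacent entries of the twig multiplicity sequence: for each k, the multiset of pairs {(α, α+β)} over all 2^k strings of length k coincides with the multiset of adjacent pairs (m_k(i), m_k(i+1)) or (m_k(i+1), m_k(i)) in the twig multiplicity sequence m_k, one pair per node. -/

import Mathlib

/-- Insert between each pair of adjacent terms of a list their sum. -/
def insertSums : List ℕ → List ℕ
  | [] => []
  | [a] => [a]
  | a :: b :: l => a :: (a + b) :: insertSums (b :: l)

/-- The twig multiplicity sequence. -/
def twigSeq : ℕ → List ℕ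
  | 0 => [1, 1]
  | k + 1 => insertSums (twigSeq k)

/-- Auxiliary recursion for the node-binomial coefficient pair. -/
def coeffAux : Bool → ℕ × ℕ → List Bool → ℕ × ℕ
  | _, ab, [] => ab
  | prev, (a, b), p :: rest =>
      if p = prev then coeffAux p (a, a + b) rest else coeffAux p (a + b, a) rest

/-- The coefficient pair `(α_k, β_k)` associated to a string over `{1,2}`. -/
def coeffPair : List Bool → ℕ × ℕ
  | [] => (1, 0)
  | p :: rest => coeffAux p (1, 1) rest

/-- The unordered pair `{α, α+β}` of a string. -/
def G (l : List Bool) : Multiset ℕ :=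
  {(coeffPair l).1, (coeffPair l).1 + (coeffPair l).2}

/-- One refinement step on an unordered pair. -/
def stepM (m : Multiset ℕ) : Multiset (Multiset ℕ) :=
  m.map (fun z => ({z, m.sum} : Multiset ℕ))

/-- Multiset of unordered adjacent pairs of a list. -/
def adjPairs : List ℕ → Multiset (Multiset ℕ)
  | [] => 0
  | [_] => 0
  | a :: b :: l => ({a, b} : Multiset ℕ) ::ₘ adjPairs (b :: l)

lemma coeffAux_append (rest : List Bool) : ∀ (prev : Bool) (a b : ℕ) (p : Bool),
    coeffAux prev (a, b) (rest ++ [p]) =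
      (if p = rest.getLastD prev
        then ((coeffAux prev (a,b) rest).1, (coeffAux prev (a,b) rest).1 + (coeffAux prev (a,b) rest).2)
        else ((coeffAux prev (a,b) rest).1 + (coeffAux prev (a,b) rest).2, (coeffAux prev (a,b) rest).1)) := by
  induction rest with
  | nil => intro prev a b p; simp [coeffAux]
  | cons r rest ih =>
      intro prev a b p
      simp only [List.cons_append, coeffAux, List.getLastD_cons]
      by_cases h : r = prev <;> simp [h, ih]

lemma coeffPair_append (l : List Bool) (p : Bool) :
    coeffPair (l ++ [p]) =
      (if p = l.getLastD true
        then ((coeffPair l).1, (coeffPair l).1 + (coeffPair l).2)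
        else ((coeffPair l).1 + (coeffPair l).2, (coeffPair l).1)) := by
  cases l with
  | nil => cases p <;> simp [coeffPair, coeffAux]
  | cons q rest =>
      simp only [List.cons_append, coeffPair, List.getLastD_cons]
      exact coeffAux_append rest q 1 1 p

lemma children_eq (l : List Bool) :
    ({G (l ++ [true]), G (l ++ [false])} : Multiset (Multiset ℕ)) = stepM (G l) := by
  rcases hab : coeffPair l with ⟨a, b⟩
  have hG : G l = {a, a + b} := by simp [G, hab]
  have hstep : stepM (G l) =
      ({({a, a + (a + b)} : Multiset ℕ), ({a + b, a + (a + b)} : Multiset ℕ)} :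
        Multiset (Multiset ℕ)) := by
    simp [hG, stepM]
  have hp := coeffPair_append l true
  have hf := coeffPair_append l false
  rw [hab] at hp hf
  rw [hstep]
  cases hq : l.getLastD true with
  | true =>
      rw [hq] at hp hf
      simp only [if_pos rfl, decide_eq_true_eq, reduceIte] at hp hf
      have h1 : G (l ++ [true]) = {a, a + (a + b)} := by
        simp [G, hp]
      have h2 : G (l ++ [false]) = {a + b, a + (a + b)} := by
        have : a + b + a = a + (a + b) := by ring
        simp [G, hf, this]
      rw [h1, h2]
  | false =>
      rw [hq] at hp hf
      simp only [decide_eq_true_eq, reduceIte] at hp hf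
      have h1 : G (l ++ [true]) = {a + b, a + (a + b)} := by
        have : a + b + a = a + (a + b) := by ring
        simp [G, hp, this]
      have h2 : G (l ++ [false]) = {a, a + (a + b)} := by
        simp [G, hf]
      rw [h1, h2, Multiset.pair_comm]

lemma insertSums_cons (a : ℕ) (l : List ℕ) : ∃ t, insertSums (a :: l) = a :: t := by
  cases l with
  | nil => exact ⟨[], rfl⟩
  | cons b l => exact ⟨_, rfl⟩

lemma insertSums_length (l : List ℕ) : ∀ a, (insertSums (a :: l)).length = 2 * l.length + 1 := by
  induction l with
  | nil => intro a; rfl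
  | cons b l ih =>
      intro a
      show (a :: (a + b) :: insertSums (b :: l)).length = _
      simp [ih b]; ring

lemma twigSeq_shape (k : ℕ) : ∃ t : List ℕ, twigSeq k = 1 :: t ∧ t.length = 2 ^ k := by
  induction k with
  | zero => exact ⟨[1], rfl, rfl⟩
  | succ k ih =>
      obtain ⟨t, ht, hlen⟩ := ih
      obtain ⟨t', ht'⟩ := insertSums_cons 1 t
      refine ⟨t', by rw [show twigSeq (k+1) = insertSums (twigSeq k) from rfl, ht, ht'], ?_⟩
      have := insertSums_length t 1
      rw [ht'] at this
      simp only [List.length_cons, hlen] at this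
      omega

lemma adjPairs_range (l : List ℕ) : ∀ a : ℕ,
    (Multiset.range l.length).map (fun i => ({(a :: l)[i]!, (a :: l)[i + 1]!} : Multiset ℕ)) =
      adjPairs (a :: l) := by
  induction l with
  | nil => intro a; rfl
  | cons b l ih =>
      intro a
      have hr : Multiset.range (l.length + 1) = 0 ::ₘ (Multiset.range l.length).map Nat.succ := by
        simp [Multiset.range, List.range_succ_eq_map]
      simp only [List.length_cons, hr, Multiset.map_cons, Multiset.map_map]
      rw [show adjPairs (a :: b :: l) = ({a, b} : Multiset ℕ) ::ₘ adjPairs (b :: l) from rfl]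
      congr 1
      · rw [← ih b]
        apply Multiset.map_congr rfl
        intro i _
        simp [Nat.succ_eq_add_one]

lemma insertSums_adjPairs (l : List ℕ) : adjPairs (insertSums l) = (adjPairs l).bind stepM := by
  induction l with
  | nil => rfl
  | cons a l ih =>
      cases l with
      | nil => rfl
      | cons b l =>
          obtain ⟨t, ht⟩ := insertSums_cons b l
          have h1 : insertSums (a :: b :: l) = a :: (a + b) :: b :: t := by
            rw [show insertSums (a :: b :: l) = a :: (a+b) :: insertSums (b :: l) from rfl, ht]
          rw [h1]
          rw [show adjPairs (a :: (a+b) :: b :: t) =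
            ({a, a+b} : Multiset ℕ) ::ₘ ({a+b, b} : Multiset ℕ) ::ₘ adjPairs (b :: t) from rfl]
          rw [← ht, ih]
          rw [show adjPairs (a :: b :: l) = ({a, b} : Multiset ℕ) ::ₘ adjPairs (b :: l) from rfl]
          rw [Multiset.cons_bind]
          have : stepM ({a, b} : Multiset ℕ) =
              ({a, a+b} : Multiset ℕ) ::ₘ ({a+b, b} : Multiset ℕ) ::ₘ 0 := by
            simp only [stepM, Multiset.insert_eq_cons, Multiset.map_cons,
              Multiset.map_singleton, Multiset.sum_cons, Multiset.sum_singleton]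
            congr 1
            exact congrArg (fun m => m ::ₘ (0 : Multiset (Multiset ℕ)))
              (Multiset.cons_swap b (a + b) 0)
          rw [this]
          simp

lemma lhs_step (k : ℕ) :
    Multiset.map (fun f : Fin (k+1) → Bool => G (List.ofFn f))
        (Finset.univ : Finset (Fin (k+1) → Bool)).val =
      (Multiset.map (fun f : Fin k → Bool => G (List.ofFn f))
        (Finset.univ : Finset (Fin k → Bool)).val).bind stepM := by
  have huniv : (Finset.univ : Finset (Fin (k+1) → Bool)).val =
      Multiset.map (Fin.snocEquiv (fun _ => Bool))
        (Finset.univ : Finset (Bool × (Fin k → Bool))).val := by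
    rw [← Finset.map_univ_equiv (Fin.snocEquiv (fun _ => Bool))]
    rfl
  rw [huniv, Multiset.map_map]
  have hprod : (Finset.univ : Finset (Bool × (Fin k → Bool))).val =
      (Finset.univ : Finset Bool).val ×ˢ (Finset.univ : Finset (Fin k → Bool)).val := by
    rw [← Finset.univ_product_univ]; rfl
  rw [hprod]
  have hmap : ∀ F : Bool × (Fin k → Bool) → Multiset ℕ,
      Multiset.map F ((Finset.univ : Finset Bool).val ×ˢ (Finset.univ : Finset (Fin k → Bool)).val)
        = ((Finset.univ : Finset (Fin k → Bool)).val).bind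
            (fun g => {F (true, g), F (false, g)}) := by
    intro F
    have huB : (Finset.univ : Finset Bool).val = ({true, false} : Multiset Bool) := by decide
    simp only [SProd.sprod, Multiset.product, huB, Multiset.map_bind, Multiset.map_map,
      Multiset.insert_eq_cons, Multiset.cons_bind, Multiset.singleton_bind,
      Multiset.bind_cons, Multiset.bind_singleton, Multiset.map_add]
    rfl
  rw [hmap, Multiset.bind_map]
  apply Multiset.bind_congr
  intro g _
  have hofn : ∀ b : Bool, List.ofFn ((Fin.snocEquiv (fun _ => Bool)) (b, g)) = List.ofFn g ++ [b] := by
    intro b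
    rw [List.ofFn_succ']
    simp [Fin.snocEquiv, Fin.snoc_castSucc]
  simp only [Function.comp, hofn]
  exact children_eq (List.ofFn g)

lemma main_aux (k : ℕ) :
    Multiset.map (fun f : Fin k → Bool => G (List.ofFn f))
        (Finset.univ : Finset (Fin k → Bool)).val = adjPairs (twigSeq k) := by
  induction k with
  | zero =>
      have : (Finset.univ : Finset (Fin 0 → Bool)).val = {fun i => i.elim0} := by
        rw [Finset.univ_unique]; rfl
      rw [this]
      simp [G, coeffPair, twigSeq, adjPairs]
  | succ k ih =>
      rw [lhs_step k, ih, show twigSeq (k+1) = insertSums (twigSeq k) from rfl,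
        insertSums_adjPairs]

/-- The multiset of unordered pairs `{α, α+β}` over all `2^k` strings of length `k`
coincides with the multiset of unordered pairs of adjacent entries of the twig
multiplicity sequence `m_k`, one pair per node. -/
theorem coeffPairs_eq_adjacent_pairs (k : ℕ) :
    Multiset.map
      (fun f : Fin k → Bool =>
        ({(coeffPair (List.ofFn f)).1,
          (coeffPair (List.ofFn f)).1 + (coeffPair (List.ofFn f)).2} : Multiset ℕ))
      (Finset.univ : Finset (Fin k → Bool)).val =
    Multiset.map
      (fun i => ({(twigSeq k)[i]!, (twigSeq k)[i + 1]!} : Multiset ℕ))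
      (Multiset.range (2 ^ k)) := by
  obtain ⟨t, ht, hlen⟩ := twigSeq_shape k
  have := adjPairs_range t 1
  rw [hlen, ← ht] at this
  rw [this]
  exact main_aux k
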